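/- Let X_s ∈ ℝ^{n_s×d} for s = 1,…,T, and let Λ_0, Λ_1, …, Λ_T ∈ ℝ^{d×d} be symmetric matrices with 0 ≺ Λ_0 ⪯ Λ_1 ⪯ ⋯ ⪯ Λ_T. Define A_0 = Λ_0 and A_t = Λ_t + Σ_{s=1}^t X_sᵀX_s for t ≥ 1. Then Σ_{t=1}^T tr( X_t A_t^{-1} X_tᵀ ) ≤ Σ_{i=1}^d log( λ_i(A_T) / λ_i(Λ_0) ), where λ_i(M) denotes the i-th largest eigenvalue of the symmetric matrix M. -/

import Mathlib

open Matrix Finset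

noncomputable section

/-- `μ` lists the eigenvalues of the Hermitian matrix `A` in decreasing order:
`μ i` is the `i`-th largest eigenvalue of `A`. -/
def IsDecrEigSeq {d : ℕ} {A : Matrix (Fin d) (Fin d) ℝ} (hA : A.IsHermitian)
    (μ : Fin d → ℝ) : Prop :=
  Antitone μ ∧ ∃ σ : Equiv.Perm (Fin d), μ = hA.eigenvalues ∘ σ

section Helpers

variable {d : ℕ}

lemma trace_eq_sum_eigs {M : Matrix (Fin d) (Fin d) ℝ} (hM : M.IsHermitian) :
    M.trace = ∑ i, hM.eigenvalues i := by
  nth_rewrite 1 [hM.spectral_theorem]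
  rw [Unitary.conjStarAlgAut_apply]
  rw [Matrix.trace_mul_cycle]
  rw [Unitary.coe_star_mul_self, Matrix.one_mul, Matrix.trace_diagonal]
  simp [RCLike.ofReal_real_eq_id]

lemma one_le_eigenvalues {R : Matrix (Fin d) (Fin d) ℝ} (hR : R.IsHermitian)
    (h : (R - 1).PosSemidef) (i : Fin d) : 1 ≤ hR.eigenvalues i := by
  have hv := hR.mulVec_eigenvectorBasis i
  set v : Fin d → ℝ := ⇑(hR.eigenvectorBasis i) with hvdef
  have hv0 : v ≠ 0 := by
    intro hc
    apply hR.eigenvectorBasis.orthonormal.ne_zero i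
    ext j
    exact congrFun hc j
  have hpos : 0 < star v ⬝ᵥ v := dotProduct_star_self_pos_iff.mpr hv0
  have h2 := h.dotProduct_mulVec_nonneg v
  rw [Matrix.sub_mulVec, Matrix.one_mulVec, hv, dotProduct_sub, dotProduct_smul,
    smul_eq_mul] at h2
  nlinarith

lemma one_le_det_one_add {Q : Matrix (Fin d) (Fin d) ℝ} (hQ : Q.PosSemidef) :
    1 ≤ (1 + Q).det := by
  have h1 : (1 + Q).IsHermitian := Matrix.isHermitian_one.add hQ.1
  have h2 : ((1 + Q) - 1).PosSemidef := by simpa using hQ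
  have hdet : (1 + Q).det = ∏ i, h1.eigenvalues i := by
    have := h1.det_eq_prod_eigenvalues
    rwa [RCLike.ofReal_real_eq_id] at this
  rw [hdet]
  calc (1 : ℝ) = ∏ _i : Fin d, 1 := by simp
    _ ≤ ∏ i, h1.eigenvalues i :=
      Finset.prod_le_prod (fun i _ => zero_le_one) (fun i _ => one_le_eigenvalues h1 h2 i)

lemma posdef_conj {B N : Matrix (Fin d) (Fin d) ℝ} (hB : B.PosDef) (hN : IsUnit N.det) :
    (Nᴴ * B * N).PosDef := by
  refine Matrix.PosDef.of_dotProduct_mulVec_pos (Matrix.isHermitian_conjTranspose_mul_mul N hB.1) fun x hx => ?_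
  have hx' : N *ᵥ x ≠ 0 := by
    intro hc
    apply hx
    have := congrArg (fun y => N⁻¹ *ᵥ y) hc
    simpa [Matrix.mulVec_mulVec, Matrix.nonsing_inv_mul _ hN] using this
  have := hB.dotProduct_mulVec_pos hx'
  simpa only [star_mulVec, dotProduct_mulVec, vecMul_vecMul] using this

lemma trace_one_sub_le {D : Matrix (Fin d) (Fin d) ℝ} (hD : D.PosDef) :
    (1 - D).trace ≤ - Real.log D.det := by
  have hh := hD.1
  have heig : ∀ i, 0 < hh.eigenvalues i := hD.eigenvalues_pos
  have hdet : D.det = ∏ i, hh.eigenvalues i := by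
    have := hh.det_eq_prod_eigenvalues
    rwa [RCLike.ofReal_real_eq_id] at this
  have hlog : Real.log D.det = ∑ i, Real.log (hh.eigenvalues i) := by
    rw [hdet, Real.log_prod (fun i _ => (heig i).ne')]
  have htr : D.trace = ∑ i, hh.eigenvalues i := trace_eq_sum_eigs hh
  rw [Matrix.trace_sub, Matrix.trace_one, htr, hlog]
  have hsum : ∑ i, Real.log (hh.eigenvalues i) ≤ ∑ i, (hh.eigenvalues i - 1) :=
    Finset.sum_le_sum fun i _ => Real.log_le_sub_one_of_pos (heig i)
  rw [Finset.sum_sub_distrib] at hsum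
  simp only [Finset.sum_const, Finset.card_univ, Fintype.card_fin, nsmul_eq_mul,
    mul_one] at hsum
  simp only [Fintype.card_fin]
  linarith

open scoped MatrixOrder in
lemma det_mono {B P : Matrix (Fin d) (Fin d) ℝ} (hB : B.PosDef) (hP : P.PosSemidef) :
    B.det ≤ (B + P).det := by
  set S := CFC.sqrt B with hSdef
  have hSS : S * S = B := CFC.sqrt_mul_sqrt_self B hB.posSemidef.nonneg
  have hSh : S.IsHermitian := (CFC.sqrt_nonneg B).posSemidef.1
  have hdetB : 0 < B.det := hB.det_pos
  have hdetS : S.det ≠ 0 := by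
    intro h
    rw [← hSS, Matrix.det_mul, h, mul_zero] at hdetB
    exact lt_irrefl _ hdetB
  have hSunit : IsUnit S.det := isUnit_iff_ne_zero.mpr hdetS
  have hSinv : S⁻¹ * S = 1 := Matrix.nonsing_inv_mul S hSunit
  have hSinv' : S * S⁻¹ = 1 := Matrix.mul_nonsing_inv S hSunit
  set Q := S⁻¹ * P * S⁻¹ with hQdef
  have hQ : Q.PosSemidef := by
    have := hP.conjTranspose_mul_mul_same (S⁻¹)
    rwa [hSh.inv.eq] at this
  have hBP : B + P = S * (1 + Q) * S := by
    rw [hQdef, Matrix.mul_add, Matrix.add_mul, Matrix.mul_one, hSS]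
    congr 1
    symm
    calc S * (S⁻¹ * P * S⁻¹) * S = S * (S⁻¹ * (P * (S⁻¹ * S))) := by
          simp only [Matrix.mul_assoc]
      _ = P := by rw [hSinv, Matrix.mul_one, ← Matrix.mul_assoc, hSinv', Matrix.one_mul]
  have hdetBP : (B + P).det = B.det * (1 + Q).det := by
    rw [hBP, Matrix.det_mul, Matrix.det_mul, ← hSS, Matrix.det_mul]
    ring
  rw [hdetBP]
  exact le_mul_of_one_le_right hdetB.le (one_le_det_one_add hQ)

open scoped MatrixOrder in
lemma core_step {B M : Matrix (Fin d) (Fin d) ℝ} (hB : B.PosDef) (hM : M.PosSemidef) :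
    (M * (B + M)⁻¹).trace ≤ Real.log (B + M).det - Real.log B.det := by
  set A := B + M with hAdef
  have hApd : A.PosDef := hB.add_posSemidef hM
  set S := CFC.sqrt A with hSdef
  have hSS : S * S = A := CFC.sqrt_mul_sqrt_self A hApd.posSemidef.nonneg
  have hSh : S.IsHermitian := (CFC.sqrt_nonneg A).posSemidef.1
  have hdetA : 0 < A.det := hApd.det_pos
  have hdetS : S.det ≠ 0 := by
    intro h
    rw [← hSS, Matrix.det_mul, h, mul_zero] at hdetA
    exact lt_irrefl _ hdetA
  have hSunit : IsUnit S.det := isUnit_iff_ne_zero.mpr hdetS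
  have hSinv : S⁻¹ * S = 1 := Matrix.nonsing_inv_mul S hSunit
  have hSinv' : S * S⁻¹ = 1 := Matrix.mul_nonsing_inv S hSunit
  have hSinvU : IsUnit (S⁻¹).det := by
    rw [Matrix.det_nonsing_inv]
    exact isUnit_iff_ne_zero.mpr (by simpa [Ring.inverse_eq_inv'] using inv_ne_zero hdetS)
  have hAinv : A⁻¹ = S⁻¹ * S⁻¹ := by rw [← hSS, Matrix.mul_inv_rev]
  set D := S⁻¹ * B * S⁻¹ with hDdef
  have hDpos : D.PosDef := by
    have := posdef_conj hB hSinvU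
    rwa [hSh.inv.eq] at this
  have hSAS : S⁻¹ * A * S⁻¹ = 1 := by
    rw [← hSS]
    simp only [Matrix.mul_assoc]
    rw [hSinv', Matrix.mul_one, hSinv]
  have hC : S⁻¹ * M * S⁻¹ = 1 - D := by
    have hMA : M = A - B := by rw [hAdef]; abel
    rw [hMA, Matrix.mul_sub, Matrix.sub_mul, hSAS]
  have htr : (M * A⁻¹).trace = (1 - D).trace := by
    rw [hAinv, ← Matrix.mul_assoc, Matrix.trace_mul_cycle, Matrix.mul_assoc, ← Matrix.mul_assoc,
      hC]
  have hdetD : Real.log D.det = Real.log B.det - Real.log A.det := by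
    have h1 : D.det = B.det * A.det⁻¹ := by
      rw [hDdef, Matrix.det_mul, Matrix.det_mul, Matrix.det_nonsing_inv,
        Ring.inverse_eq_inv', ← hSS, Matrix.det_mul]
      field_simp
    rw [h1, Real.log_mul hB.det_pos.ne' (inv_ne_zero hdetA.ne'), Real.log_inv]
    ring
  have := trace_one_sub_le hDpos
  rw [htr]
  linarith

lemma psd_sum {ι : Type*} (s : Finset ι) (f : ι → Matrix (Fin d) (Fin d) ℝ)
    (h : ∀ i ∈ s, (f i).PosSemidef) : (∑ i ∈ s, f i).PosSemidef :=
  Finset.sum_induction f _ (fun _ _ ha hb => ha.add hb) .zero h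

end Helpers

/-- **Telescoping trace bound.**  For symmetric `0 ≺ Λ_0 ⪯ Λ_1 ⪯ ⋯ ⪯ Λ_T`
and `A_t = Λ_t + ∑_{s=1}^t XₛᵀXₛ` (`A_0 = Λ_0`):
`∑_{t=1}^T tr(X_t A_t⁻¹ X_tᵀ) ≤ ∑_{i=1}^d log (λ_i(A_T)/λ_i(Λ_0))`,
with eigenvalues in decreasing order. -/
theorem multivaw_trace_telescoping_bound
    (T d : ℕ) (n : ℕ → ℕ)
    (X : (s : ℕ) → Matrix (Fin (n s)) (Fin d) ℝ)
    (Λ : ℕ → Matrix (Fin d) (Fin d) ℝ)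
    (hΛsymm : ∀ t ≤ T, (Λ t).IsHermitian)
    (hΛ0pos : (Λ 0).PosDef)
    (hΛmono : ∀ t, t + 1 ≤ T → (Λ (t + 1) - Λ t).PosSemidef)
    (A : ℕ → Matrix (Fin d) (Fin d) ℝ)
    (hA : ∀ t ≤ T, A t = Λ t + ∑ s ∈ Icc 1 t, (X s)ᵀ * X s)
    (hAT : (A T).IsHermitian)
    (μA μΛ : Fin d → ℝ)
    (hμA : IsDecrEigSeq hAT μA)
    (hμΛ : IsDecrEigSeq hΛ0pos.isHermitian μΛ) :
    ∑ t ∈ Icc 1 T, ((X t) * (A t)⁻¹ * (X t)ᵀ).trace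
      ≤ ∑ i, Real.log (μA i / μΛ i) := by
  classical
  have hΛpos : ∀ t, t ≤ T → (Λ t).PosDef := by
    intro t
    induction t with
    | zero => exact fun _ => hΛ0pos
    | succ k ih =>
      intro hk
      have h1 : Λ (k + 1) = Λ k + (Λ (k + 1) - Λ k) := by abel
      rw [h1]
      exact (ih (le_trans (Nat.le_succ k) hk)).add_posSemidef (hΛmono k hk)
  have hXpsd : ∀ s : ℕ, ((X s)ᵀ * X s).PosSemidef := fun s => by
    rw [← Matrix.conjTranspose_eq_transpose_of_trivial]
    exact Matrix.posSemidef_conjTranspose_mul_self _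
  have hsum : ∀ t : ℕ, (∑ s ∈ Icc 1 t, (X s)ᵀ * X s).PosSemidef := fun t =>
    psd_sum _ _ fun i _ => hXpsd i
  have hApos : ∀ t, t ≤ T → (A t).PosDef := fun t ht => by
    rw [hA t ht]
    exact (hΛpos t ht).add_posSemidef (hsum t)
  set f : ℕ → ℝ := fun t => Real.log (A t).det with hf
  have hstep : ∀ t ∈ Icc 1 T, ((X t) * (A t)⁻¹ * (X t)ᵀ).trace ≤ f t - f (t - 1) := by
    intro t ht
    rw [Finset.mem_Icc] at ht
    obtain ⟨ht1, htT⟩ := ht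
    obtain ⟨k, rfl⟩ : ∃ k, t = k + 1 := ⟨t - 1, by omega⟩
    set Bm := Λ (k + 1) + ∑ s ∈ Icc 1 k, (X s)ᵀ * X s with hBm
    have hBmpos : Bm.PosDef := (hΛpos _ htT).add_posSemidef (hsum k)
    have hAeq : A (k + 1) = Bm + (X (k + 1))ᵀ * X (k + 1) := by
      rw [hA _ htT, Finset.sum_Icc_succ_top (by omega : 1 ≤ k + 1), hBm, add_assoc]
    have hcore := core_step hBmpos (hXpsd (k + 1))
    rw [← hAeq] at hcore
    have hk' : k ≤ T := by omega
    have hmono : Real.log (A k).det ≤ Real.log Bm.det := by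
      have hBmAk : Bm = A k + (Λ (k + 1) - Λ k) := by
        rw [hA k hk', hBm]; abel
      have hdd : (A k).det ≤ Bm.det := by
        rw [hBmAk]
        exact det_mono (hApos k hk') (hΛmono k htT)
      exact (Real.log_le_log_iff (hApos k hk').det_pos
        (lt_of_lt_of_le (hApos k hk').det_pos hdd)).mpr hdd
    have htr : ((X (k + 1)) * (A (k + 1))⁻¹ * (X (k + 1))ᵀ).trace
        = (((X (k + 1))ᵀ * X (k + 1)) * (A (k + 1))⁻¹).trace := by
      rw [Matrix.trace_mul_cycle, Matrix.mul_assoc]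
    rw [htr]
    simp only [Nat.add_sub_cancel, hf]
    linarith
  have lhs_le := Finset.sum_le_sum hstep
  have htel : ∑ t ∈ Icc 1 T, (f t - f (t - 1)) = f T - f 0 := by
    rw [← Finset.Ico_add_one_right_eq_Icc, Finset.sum_Ico_eq_sum_range]
    simp only [Nat.add_sub_cancel]
    have h1 : ∀ i : ℕ, f (1 + i) - f (1 + i - 1) = f (i + 1) - f i := by
      intro i
      congr 2 <;> omega
    rw [Finset.sum_congr rfl fun i _ => h1 i, Finset.sum_range_sub f T]
  obtain ⟨-, σ, hσ⟩ := hμA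
  obtain ⟨-, τ, hτ⟩ := hμΛ
  have hATpos : (A T).PosDef := hApos T le_rfl
  have hA0 : A 0 = Λ 0 := by rw [hA 0 (Nat.zero_le T)]; simp
  have hμApos : ∀ i, 0 < μA i := fun i => by
    rw [hσ]; exact hATpos.eigenvalues_pos (σ i)
  have hμΛpos : ∀ i, 0 < μΛ i := fun i => by
    rw [hτ]; exact hΛ0pos.eigenvalues_pos (τ i)
  have h1 : ∑ i, Real.log (μA i) = f T := by
    have hdetT : (A T).det = ∏ i, hAT.eigenvalues i := by
      have := hAT.det_eq_prod_eigenvalues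
      rwa [RCLike.ofReal_real_eq_id] at this
    have : f T = ∑ i, Real.log (hAT.eigenvalues i) := by
      rw [hf]
      simp only
      rw [hdetT, Real.log_prod (fun i _ => (hATpos.eigenvalues_pos i).ne')]
    rw [this, hσ]
    exact Equiv.sum_comp σ fun i => Real.log (hAT.eigenvalues i)
  have h2 : ∑ i, Real.log (μΛ i) = f 0 := by
    have hdet0 : (Λ 0).det = ∏ i, hΛ0pos.isHermitian.eigenvalues i := by
      have := hΛ0pos.isHermitian.det_eq_prod_eigenvalues
      rwa [RCLike.ofReal_real_eq_id] at this
    have : f 0 = ∑ i, Real.log (hΛ0pos.isHermitian.eigenvalues i) := by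
      rw [hf]
      simp only [hA0]
      rw [hdet0, Real.log_prod (fun i _ => (hΛ0pos.eigenvalues_pos i).ne')]
    rw [this, hτ]
    exact Equiv.sum_comp τ fun i => Real.log (hΛ0pos.isHermitian.eigenvalues i)
  have hrhs : ∑ i, Real.log (μA i / μΛ i) = f T - f 0 := by
    rw [← h1, ← h2, ← Finset.sum_sub_distrib]
    exact Finset.sum_congr rfl fun i _ =>
      Real.log_div (hμApos i).ne' (hμΛpos i).ne'
  rw [hrhs, ← htel]
  exact lhs_le
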